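/- Let r ≥ 2 and n ≥ 1 be integers, set m = (r-1)n, and let w = e^{2πi/r}. Suppose x_1, ..., x_m are complex numbers such that R_{rn+1}(X) = ∏_{k=1}^{m} ∏_{l=0}^{r-1} (X - x_k w^l). Then ∑_{k=1}^{m} x_k^r = -C_r(rn - 1, 1). -/

import Mathlib

open Polynomial



noncomputable def RBon (r : ℕ) : ℕ → Polynomial ℂ
  | 0 => 0
  | 1 => 1
  | n + 2 => ∑ i ∈ (Finset.range r).attach,
      Polynomial.X ^ (i : ℕ) * RBon r (n + 2 - (r - (i : ℕ)))
  decreasing_by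
    have h := i.2
    rw [Finset.mem_range] at h
    omega

noncomputable def rnomial (r n j : ℕ) : ℕ :=
  ((∑ i ∈ Finset.range r, (Polynomial.X : Polynomial ℕ) ^ i) ^ n).coeff j


lemma RBon_succ_succ (r N : ℕ) : RBon r (N+2) =
    ∑ i ∈ Finset.range r, Polynomial.X ^ i * RBon r (N + 2 - (r - i)) := by
  rw [RBon]
  exact Finset.sum_attach _ fun i => Polynomial.X ^ i * RBon r (N + 2 - (r - i))

lemma RBon_natDegree_le (r : ℕ) : ∀ M, (RBon r M).natDegree ≤ (r-1) * (M-1) := by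
  intro M
  induction M using Nat.strong_induction_on with
  | _ M IH =>
    match M with
    | 0 => simp [RBon]
    | 1 => simp [RBon]
    | (K+2) =>
      rw [RBon_succ_succ]
      apply Polynomial.natDegree_sum_le_of_forall_le
      intro i hi
      rw [Finset.mem_range] at hi
      refine le_trans (Polynomial.natDegree_mul_le) ?_
      have h1 := IH (K + 2 - (r - i)) (by omega)
      have h2 : (K + 2 - (r - i) - 1) ≤ K := by omega
      have h3 : (r-1) * (K + 2 - (r - i) - 1) ≤ (r-1) * K := Nat.mul_le_mul_left _ h2
      have h4 : (r-1) * (K+2-1) = (r-1)*K + (r-1) := by rw [show K+2-1 = K+1 from rfl]; ring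
      have h5 : (RBon r (K + 2 - (r - i))).natDegree ≤ (r-1)*K := le_trans h1 h3
      simp only [Polynomial.natDegree_X_pow]
      omega

lemma RBon_two (r : ℕ) (hr : 2 ≤ r) : RBon r 2 = X^(r-1) := by
  rw [show (2:ℕ) = 0+2 from rfl, RBon_succ_succ]
  rw [Finset.sum_eq_single (r-1)]
  · rw [show 0+2 - (r-(r-1)) = 1 by omega]
    simp [RBon]
  · intro i hi hne
    rw [Finset.mem_range] at hi
    rw [show 0+2 - (r - i) = 0 by omega]
    simp [RBon]
  · intro h; exact absurd (Finset.mem_range.mpr (by omega)) h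

lemma RBon_three (r : ℕ) (hr : 2 ≤ r) : RBon r 3 = X^(2*r-2) + X^(r-2) := by
  rw [show (3:ℕ) = 1+2 from rfl, RBon_succ_succ]
  have hsub : ({r-2, r-1} : Finset ℕ) ⊆ Finset.range r := by
    intro y hy
    simp only [Finset.mem_insert, Finset.mem_singleton] at hy
    rcases hy with rfl | rfl <;> exact Finset.mem_range.mpr (by omega)
  rw [← Finset.sum_subset hsub]
  · rw [Finset.sum_pair (by omega : r-2 ≠ r-1)]
    rw [show 1+2 - (r-(r-2)) = 1 by omega, show 1+2 - (r-(r-1)) = 2 by omega]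
    rw [RBon_two r hr]
    simp only [RBon, mul_one]
    rw [← pow_add, show r-1+(r-1) = 2*r-2 by omega, add_comm]
  · intro i hi hne
    rw [Finset.mem_range] at hi
    simp only [Finset.mem_insert, Finset.mem_singleton, not_or] at hne
    rw [show 1+2 - (r - i) = 0 by omega]
    simp [RBon]

lemma RBon_coeff (r : ℕ) (hr : 2 ≤ r) :
    ∀ N, 1 ≤ N → ∀ j, j ≤ r →
    (RBon r (N+1)).coeff ((r-1)*N - j) =
      if j = 0 then 1 else if j = r then (N:ℂ) - 1 else 0 := by
  intro N
  induction N using Nat.strong_induction_on with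
  | _ N IH =>
  intro hN j hj
  match N, hN with
  | 1, _ =>
    rw [RBon_two r hr, Polynomial.coeff_X_pow]
    rcases eq_or_ne j 0 with rfl | h0
    · simp
    · rw [if_neg h0, if_neg (by omega : ¬ ((r-1)*1 - j = r-1))]
      rcases eq_or_ne j r with hjr | hjr
      · rw [if_pos hjr]; norm_num
      · rw [if_neg hjr]
  | 2, _ =>
    rw [show (2:ℕ)+1 = 3 from rfl, RBon_three r hr, Polynomial.coeff_add,
      Polynomial.coeff_X_pow, Polynomial.coeff_X_pow]
    rcases eq_or_ne j 0 with rfl | h0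
    · rw [if_pos rfl, if_pos (by omega : (r-1)*2 - 0 = 2*r-2),
        if_neg (by omega : ¬((r-1)*2 - 0 = r-2))]
      norm_num
    · rw [if_neg h0, if_neg (by omega : ¬((r-1)*2 - j = 2*r-2))]
      rcases eq_or_ne j r with hjr | hjr
      · rw [if_pos hjr, if_pos (by omega : (r-1)*2 - j = r-2)]
        norm_num
      · rw [if_neg hjr, if_neg (by omega : ¬((r-1)*2 - j = r-2))]; norm_num
  | (L+3), _ =>
    have hB2 : (r-1)*2 ≤ (r-1)*(L+2) := Nat.mul_le_mul_left _ (by omega)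
    have hBr : r ≤ (r-1)*(L+2) := by omega
    have hA : (r-1)*(L+3) = (r-1)*(L+2) + (r-1) := by ring
    have hA2 : (r-1)*(L+3) = (r-1)*(L+1) + 2*(r-1) := by ring
    rw [show (L+3)+1 = (L+2)+2 from rfl, RBon_succ_succ, Polynomial.finset_sum_coeff]
    have hsub : ({r-2, r-1} : Finset ℕ) ⊆ Finset.range r := by
      intro y hy
      simp only [Finset.mem_insert, Finset.mem_singleton] at hy
      rcases hy with rfl | rfl <;> exact Finset.mem_range.mpr (by omega)
    rw [← Finset.sum_subset hsub]
    · rw [Finset.sum_pair (by omega : r-2 ≠ r-1)]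
      rw [show L+2+2 - (r-(r-2)) = L+2 by omega, show L+2+2 - (r-(r-1)) = (L+2)+1 by omega]
      have e1 : (X ^ (r-1) * RBon r ((L+2)+1)).coeff ((r-1)*(L+3) - j)
          = (if j = 0 then 1 else if j = r then ((L+2:ℕ):ℂ) - 1 else 0) := by
        rw [show (r-1)*(L+3) - j = ((r-1)*(L+2) - j) + (r-1) by omega,
          Polynomial.coeff_X_pow_mul]
        exact IH (L+2) (by omega) (by omega) j hj
      have e2 : (X ^ (r-2) * RBon r (L+2)).coeff ((r-1)*(L+3) - j)
          = (if j = r then 1 else 0) := by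
        rcases eq_or_ne j r with hjr | hjr
        · rw [if_pos hjr]
          rw [show (r-1)*(L+3) - j = ((r-1)*(L+1) - 0) + (r-2) by omega,
            Polynomial.coeff_X_pow_mul]
          have := IH (L+1) (by omega) (by omega) 0 (by omega)
          simpa using this
        · rw [if_neg hjr]
          apply Polynomial.coeff_eq_zero_of_natDegree_lt
          have hd1 : (X ^ (r-2) * RBon r (L+2)).natDegree ≤ (r-2) + (r-1)*(L+1) := by
            refine le_trans Polynomial.natDegree_mul_le ?_
            have hb := RBon_natDegree_le r (L+2)
            rw [(by omega : L+2-1 = L+1)] at hb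
            simp only [Polynomial.natDegree_X_pow]
            omega
          omega
      rw [e1, e2]
      rcases eq_or_ne j 0 with rfl | h0
      · rw [if_pos rfl, if_pos rfl, if_neg (by omega : ¬((0:ℕ) = r))]; norm_num
      · rw [if_neg h0, if_neg h0]
        rcases eq_or_ne j r with hjr | hjr
        · rw [if_pos hjr, if_pos hjr, if_pos hjr]; push_cast; ring
        · rw [if_neg hjr, if_neg hjr, if_neg hjr]; norm_num
    · intro i hi hne
      rw [Finset.mem_range] at hi
      simp only [Finset.mem_insert, Finset.mem_singleton, not_or] at hne
      apply Polynomial.coeff_eq_zero_of_natDegree_lt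
      have ht : (L+2+2 - (r - i)) - 1 ≤ L := by omega
      have hD := Nat.mul_le_mul_left (r-1) ht
      have hA3 : (r-1)*(L+3) = (r-1)*L + 3*(r-1) := by ring
      have hd1 : (X ^ i * RBon r (L+2+2 - (r-i))).natDegree
          ≤ i + (r-1)*((L+2+2 - (r-i)) - 1) := by
        refine le_trans Polynomial.natDegree_mul_le ?_
        have := RBon_natDegree_le r (L+2+2 - (r-i))
        simp only [Polynomial.natDegree_X_pow]
        omega
      omega

lemma rnomial_coeff_S (r k : ℕ) (hk : k < r) :
    (∑ i ∈ Finset.range r, (Polynomial.X : Polynomial ℕ) ^ i).coeff k = 1 := by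
  rw [Polynomial.finset_sum_coeff]
  simp only [Polynomial.coeff_X_pow]
  rw [Finset.sum_ite_eq (Finset.range r) k (fun _ => 1), if_pos (Finset.mem_range.mpr hk)]

lemma rnomial_coeff0 (r : ℕ) (hr : 2 ≤ r) (N : ℕ) :
    ((∑ i ∈ Finset.range r, (Polynomial.X : Polynomial ℕ) ^ i) ^ N).coeff 0 = 1 := by
  induction N with
  | zero => simp
  | succ N ih =>
    rw [pow_succ, Polynomial.mul_coeff_zero, ih, rnomial_coeff_S r 0 (by omega), one_mul]

lemma rnomial_one (r : ℕ) (hr : 2 ≤ r) (N : ℕ) : rnomial r N 1 = N := by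
  induction N with
  | zero => simp [rnomial, Polynomial.coeff_one]
  | succ N ih =>
    unfold rnomial at ih ⊢
    rw [pow_succ, Polynomial.coeff_mul, Finset.Nat.sum_antidiagonal_eq_sum_range_succ_mk]
    rw [Finset.sum_range_succ, Finset.sum_range_succ, Finset.sum_range_zero]
    rw [rnomial_coeff0 r hr, ih, rnomial_coeff_S r 1 (by omega),
      rnomial_coeff_S r 0 (by omega)]
    omega

theorem stmt_3 (r n : ℕ) (hr : 2 ≤ r) (hn : 1 ≤ n)
    (m : ℕ) (hm : m = (r - 1) * n)
    (w : ℂ) (hw : w = Complex.exp (2 * Real.pi * Complex.I / r))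
    (x : Fin m → ℂ)
    (hfac : RBon r (r * n + 1) =
      ∏ k : Fin m, ∏ l ∈ Finset.range r,
        (Polynomial.X - Polynomial.C (x k * w ^ l))) :
    ∑ k : Fin m, x k ^ r = -(rnomial r (r * n - 1) 1 : ℂ) := by
  have hm1 : 1 ≤ m := by
    have : 1*1 ≤ (r-1)*n := Nat.mul_le_mul (by omega) hn
    omega
  have hrn : 2 ≤ r*n := by
    have := Nat.mul_le_mul_left r hn
    omega
  have hprim : IsPrimitiveRoot w r := by
    rw [hw]; exact Complex.isPrimitiveRoot_exp r (by omega)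
  have h2 : RBon r (r*n+1) = Polynomial.expand ℂ r (∏ k : Fin m, (X - C (x k ^ r))) := by
    rw [hfac, map_prod]
    refine Finset.prod_congr rfl fun k _ => ?_
    rw [map_sub, Polynomial.expand_X, Polynomial.expand_C,
      X_pow_sub_C_eq_prod hprim (by omega : 0 < r) (rfl : x k ^ r = x k ^ r)]
    exact Finset.prod_congr rfl fun l _ => by rw [mul_comm]
  have hcL := RBon_coeff r hr (r*n) (by omega) r le_rfl
  rw [if_neg (by omega : ¬ (r = 0)), if_pos rfl] at hcL
  have hrm : (r-1)*(r*n) = r*m := by rw [hm]; ring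
  have hm2 : r*m = r*(m-1) + r := by
    have h : m - 1 + 1 = m := by omega
    have : r*(m-1) + r = r*((m-1)+1) := by ring
    rw [this, h]
  have hidx : (r-1)*(r*n) - r = r*(m-1) := by omega
  rw [hidx, h2, Polynomial.coeff_expand_mul' (by omega : 0 < r)] at hcL
  have hv : (∏ k : Fin m, (X - C (x k ^ r))).coeff (m-1) = -∑ k : Fin m, x k ^ r := by
    have := Polynomial.prod_X_sub_C_coeff_card_pred Finset.univ
      (fun k : Fin m => x k ^ r) (by simp only [Finset.card_univ, Fintype.card_fin]; omega)
    simpa using this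
  rw [hv] at hcL
  rw [rnomial_one r hr, Nat.cast_sub (by omega : 1 ≤ r*n)]
  push_cast at hcL ⊢
  linear_combination -hcL
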